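/- Let X ∈ ℝ^{n×d}, y ∈ ℝⁿ, and let Ψ : ℝ^d → ℝ be convex and differentiable. Let β₀, β_∞ ∈ ℝ^d satisfy Xβ_∞ = y and ∇Ψ(β_∞) − ∇Ψ(β₀) ∈ range(Xᵀ). Then β_∞ minimizes the Bregman divergence D_Ψ(·, β₀) over the constraint set: for every β ∈ ℝ^d with Xβ = y, D_Ψ(β_∞, β₀) ≤ D_Ψ(β, β₀). -/

import Mathlib

lemma grad_ineq {d : ℕ} (Ψ : EuclideanSpace ℝ (Fin d) → ℝ)
    (hconv : ConvexOn ℝ Set.univ Ψ) (hdiff : Differentiable ℝ Ψ)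
    (x y : EuclideanSpace ℝ (Fin d)) :
    Ψ x + (inner ℝ (gradient Ψ x) (y - x) : ℝ) ≤ Ψ y := by
  set g : ℝ → ℝ := fun t => Ψ (AffineMap.lineMap x y t) with hg
  have hline : ∀ t : ℝ, AffineMap.lineMap x y t = x + t • (y - x) := by
    intro t
    simp [AffineMap.lineMap_apply, vsub_eq_sub, vadd_eq_add, add_comm]
  have hgc : ConvexOn ℝ Set.univ g := by
    have := hconv.comp_affineMap (AffineMap.lineMap x y)
    exact this
  -- derivative of g at 0
  have hfd : HasFDerivAt Ψ (InnerProductSpace.toDual ℝ _ (gradient Ψ x)) x := by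
    have := (hdiff x).hasGradientAt
    rw [hasGradientAt_iff_hasFDerivAt] at this
    exact this
  have hlinederiv : HasDerivAt (fun t : ℝ => x + t • (y - x)) (y - x) (0 : ℝ) := by
    have h1 : HasDerivAt (fun t : ℝ => t • (y - x)) ((1 : ℝ) • (y - x)) (0 : ℝ) :=
      (hasDerivAt_id (0 : ℝ)).smul_const (y - x)
    simpa using h1.const_add x
  have hgd : HasDerivAt g ((inner ℝ (gradient Ψ x) (y - x) : ℝ)) 0 := by
    have hfd' : HasFDerivAt Ψ (InnerProductSpace.toDual ℝ _ (gradient Ψ x))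
        (x + (0 : ℝ) • (y - x)) := by simpa using hfd
    have hcomp := hfd'.comp_hasDerivAt (0 : ℝ) hlinederiv
    have : HasDerivAt (fun t : ℝ => Ψ (x + t • (y - x)))
        ((InnerProductSpace.toDual ℝ _ (gradient Ψ x)) (y - x)) 0 := by
      exact hcomp
    have heq : g = fun t : ℝ => Ψ (x + t • (y - x)) := by
      funext t; rw [hg]; simp [hline t]
    rw [heq]
    simpa [InnerProductSpace.toDual_apply_apply] using this
  have hs := hgc.le_slope_of_hasDerivAt (Set.mem_univ (0 : ℝ)) (Set.mem_univ (1 : ℝ))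
    zero_lt_one hgd
  have hslope : slope g 0 1 = g 1 - g 0 := by simp [slope_def_field]
  have hg0 : g 0 = Ψ x := by simp [g]
  have hg1 : g 1 = Ψ y := by simp [g]
  rw [hslope, hg0, hg1] at hs
  linarith

theorem stmt_16 {n d : ℕ} (X : Matrix (Fin n) (Fin d) ℝ) (y : Fin n → ℝ)
    (Ψ : EuclideanSpace ℝ (Fin d) → ℝ)
    (hconv : ConvexOn ℝ Set.univ Ψ) (hdiff : Differentiable ℝ Ψ)
    (β₀ βinf : EuclideanSpace ℝ (Fin d)) (hfit : X.mulVec βinf = y)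
    (hrange : ∃ u : Fin n → ℝ,
      ∀ j, (gradient Ψ βinf - gradient Ψ β₀) j = X.transpose.mulVec u j) :
    ∀ b : EuclideanSpace ℝ (Fin d), X.mulVec b = y →
      Ψ βinf - Ψ β₀ - (inner ℝ (gradient Ψ β₀) (βinf - β₀) : ℝ) ≤
        Ψ b - Ψ β₀ - (inner ℝ (gradient Ψ β₀) (b - β₀) : ℝ) := by
  intro b hb
  obtain ⟨u, hu⟩ := hrange
  have hgrad := grad_ineq Ψ hconv hdiff βinf b
  -- orthogonality
  have hXv : X.mulVec (fun j => b j - βinf j) = 0 := by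
    have : X.mulVec (b - βinf) = 0 := by
      rw [Matrix.mulVec_sub, hb, hfit, sub_self]
    rw [← this]; congr 1
  have horth : (inner ℝ (gradient Ψ βinf - gradient Ψ β₀) (b - βinf) : ℝ) = 0 := by
    rw [PiLp.inner_apply]
    have h1 : ∀ j, (inner ℝ ((gradient Ψ βinf - gradient Ψ β₀) j) ((b - βinf) j) : ℝ)
        = (X.transpose.mulVec u j) * (b j - βinf j) := by
      intro j
      simp [RCLike.inner_apply, hu j, PiLp.sub_apply, mul_comm]
    rw [Finset.sum_congr rfl fun j _ => h1 j]
    have : ∑ j, X.transpose.mulVec u j * (b j - βinf j)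
        = ∑ i, u i * X.mulVec (fun j => b j - βinf j) i := by
      simp only [Matrix.mulVec, dotProduct, Matrix.transpose_apply,
        Finset.sum_mul, Finset.mul_sum]
      rw [Finset.sum_comm]
      congr 1; funext i; congr 1; funext j; ring
    rw [this, hXv]
    simp
  have hinner1 : (inner ℝ (gradient Ψ βinf) (b - βinf) : ℝ)
      = (inner ℝ (gradient Ψ β₀) (b - βinf) : ℝ) := by
    have := horth
    rw [inner_sub_left] at this
    linarith
  have hinner2 : (inner ℝ (gradient Ψ β₀) (b - β₀) : ℝ)
      = (inner ℝ (gradient Ψ β₀) (b - βinf) : ℝ) + (inner ℝ (gradient Ψ β₀) (βinf - β₀) : ℝ) := by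
    rw [← inner_add_right]
    congr 1
    abel
  rw [hinner1] at hgrad
  linarith
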